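/- In the Attacker-Defender game with equal endowments R, the expected equilibrium conflict investments measured as proportions of the endowment converge as R goes to infinity: lim_{R→∞} E(a*)/R = 1 − 2/e for Attacker and lim_{R→∞} E(d*)/R = 1/e for Defender. -/

import Mathlib

/-- The `n`-th harmonic number `H_n = 1 + 1/2 + ... + 1/n` (with `H_0 = 0`). -/
noncomputable def H (n : ℕ) : ℝ := ∑ k ∈ Finset.Icc 1 n, (1 : ℝ) / k

/-- `l` is the upper bound `l*` for endowment `R`:
the unique `1 ≤ l ≤ R - 1` with `H_R - H_{R-l} < 1 < H_R - H_{R-l-1}`. -/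
def IsUpperBound (R l : ℕ) : Prop :=
  1 ≤ l ∧ l ≤ R - 1 ∧ H R - H (R - l) < 1 ∧ 1 < H R - H (R - l - 1)

/-- Attacker's equilibrium mixed strategy (defender endowment `R`, upper bound `l`). -/
noncomputable def astar (R l : ℕ) : ℕ → ℝ := fun i =>
  if i = 0 then ((R : ℝ) - l) / R
  else if i ≤ l then ((R : ℝ) - l) / (((R : ℝ) - i + 1) * ((R : ℝ) - i))
  else 0

/-- Defender's equilibrium mixed strategy (defender endowment `R`, upper bound `l`). -/
noncomputable def dstar (R l : ℕ) : ℕ → ℝ := fun j =>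
  if j < l then 1 / ((R : ℝ) - j)
  else if j = l then 1 - ∑ k ∈ Finset.range l, 1 / ((R : ℝ) - k)
  else 0

/-- Expected conflict investment of a mixed strategy on `{0, ..., R}`. -/
noncomputable def Einv (R : ℕ) (s : ℕ → ℝ) : ℝ := ∑ i ∈ Finset.range (R + 1), (i : ℝ) * s i

/- ### Auxiliary lemmas -/

lemma H_succ (n : ℕ) : H (n+1) = H n + 1/(n+1) := by
  unfold H
  rw [Finset.sum_Icc_succ_top (by omega)]
  push_cast; ring

lemma H_diff {m R : ℕ} (h : m ≤ R) : H R - H m = ∑ k ∈ Finset.Ioc m R, (1:ℝ)/k := by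
  have h1 : H R = H m + ∑ k ∈ Finset.Ioc m R, (1:ℝ)/k := by
    unfold H
    rw [show Finset.Icc 1 R = Finset.Ioc 0 R from (Finset.Icc_add_one_left_eq_Ioc 0 R).symm ▸ rfl,
        show Finset.Icc 1 m = Finset.Ioc 0 m from rfl]
    exact (Finset.sum_Ioc_consecutive _ (Nat.zero_le m) h).symm
  linarith

lemma log_succ_sub_le {x : ℝ} (hx : 0 < x) : Real.log (x+1) - Real.log x ≤ 1/x := by
  rw [← Real.log_div (by positivity) (ne_of_gt hx)]
  have h := Real.log_le_sub_one_of_pos (show (0:ℝ) < (x+1)/x by positivity)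
  have : (x+1)/x - 1 = 1/x := by field_simp; ring
  linarith

lemma le_log_succ_sub {x : ℝ} (hx : 0 < x) : 1/(x+1) ≤ Real.log (x+1) - Real.log x := by
  have h := Real.log_le_sub_one_of_pos (show (0:ℝ) < x/(x+1) by positivity)
  have hd : Real.log (x/(x+1)) = Real.log x - Real.log (x+1) :=
    Real.log_div (ne_of_gt hx) (by positivity)
  have h2 : x/(x+1) - 1 = -(1/(x+1)) := by field_simp; ring
  linarith

lemma harmonic_le_log {m R : ℕ} (hm : 1 ≤ m) (h : m ≤ R) :
    H R - H m ≤ Real.log R - Real.log m := by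
  induction R, h using Nat.le_induction with
  | base => simp
  | succ n hn ih =>
    have hn0 : (0:ℝ) < n := by exact_mod_cast Nat.lt_of_lt_of_le hm hn
    have := le_log_succ_sub hn0
    rw [H_succ]
    push_cast
    linarith

lemma log_le_harmonic {m R : ℕ} (hm : 1 ≤ m) (h : m ≤ R) :
    Real.log (R+1) - Real.log (m+1) ≤ H R - H m := by
  induction R, h using Nat.le_induction with
  | base => simp
  | succ n hn ih =>
    have hn0 : (0:ℝ) < (n:ℝ)+1 := by positivity
    have := log_succ_sub_le hn0
    rw [H_succ]
    push_cast
    push_cast at this ih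
    linarith

lemma S_eq_H {R l : ℕ} (h : l ≤ R) :
    ∑ k ∈ Finset.range l, 1/((R:ℝ)-(k:ℕ)) = H R - H (R - l) := by
  rw [H_diff (Nat.sub_le R l)]
  apply Finset.sum_nbij' (fun k => R - k) (fun k => R - k)
  · intro a ha
    simp only [Finset.mem_range] at ha
    simp only [Finset.mem_Ioc]
    omega
  · intro a ha
    simp only [Finset.mem_Ioc] at ha
    simp only [Finset.mem_range]
    omega
  · intro a ha
    simp only [Finset.mem_range] at ha
    omega
  · intro a ha
    simp only [Finset.mem_Ioc] at ha
    omega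
  · intro a ha
    simp only [Finset.mem_range] at ha
    rw [Nat.cast_sub (by omega)]

lemma Einv_dstar {R l : ℕ} (h2 : l < R) :
    Einv R (dstar R l) = ((R:ℝ) - l) * ∑ k ∈ Finset.range l, 1/((R:ℝ)-k) := by
  unfold Einv dstar
  rw [← Finset.sum_subset (Finset.range_subset_range.mpr (by omega : l + 1 ≤ R + 1))
      (fun i _ hi => by
        simp only [Finset.mem_range, not_lt] at hi
        have hi1 : ¬ i < l := by omega
        have hi2 : i ≠ l := by omega
        simp [hi1, hi2])]
  rw [Finset.sum_range_succ]
  have key : ∀ i ∈ Finset.range l,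
      (i:ℝ) * (if i < l then 1/((R:ℝ)-i) else if i = l then 1 - ∑ k ∈ Finset.range l, 1/((R:ℝ)-k) else 0)
      = (R:ℝ)/((R:ℝ)-i) - 1 := by
    intro i hi
    simp only [Finset.mem_range] at hi
    rw [if_pos hi]
    have : ((R:ℝ) - i) ≠ 0 := by
      have : (i:ℝ) < R := by exact_mod_cast lt_trans hi h2
      linarith
    field_simp
    ring
  rw [Finset.sum_congr rfl key, Finset.sum_sub_distrib, Finset.sum_const]
  simp only [lt_self_iff_false, if_false, if_pos rfl, Finset.card_range, nsmul_eq_mul, mul_one]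
  have hsum : ∑ x ∈ Finset.range l, (R:ℝ)/((R:ℝ)-x)
      = (R:ℝ) * ∑ x ∈ Finset.range l, 1/((R:ℝ)-x) := by
    rw [Finset.mul_sum]; exact Finset.sum_congr rfl fun i _ => by ring
  rw [hsum]; simp only [if_true]; ring

lemma aux_term {x y a : ℝ} (h1 : x - y ≠ 0) (h2 : x - (y+1) ≠ 0) :
    (y+1) * ((x-a)/((x-(y+1)+1)*(x-(y+1))))
      = ((x-a)*(y+1)/(x-(y+1)) - (x-a)*y/(x-y)) - (x-a)/(x-y) := by
  have h3 : x-(y+1)+1 = x - y := by ring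
  rw [h3]
  field_simp
  ring

lemma Einv_astar {R l : ℕ} (h2 : l < R) :
    Einv R (astar R l) = (l:ℝ) - ((R:ℝ) - l) * ∑ k ∈ Finset.range l, 1/((R:ℝ)-k) := by
  unfold Einv astar
  rw [← Finset.sum_subset (Finset.range_subset_range.mpr (by omega : l + 1 ≤ R + 1))
      (fun i _ hi => by
        simp only [Finset.mem_range, not_lt] at hi
        have hi0 : i ≠ 0 := by omega
        have hi1 : ¬ i ≤ l := by omega
        simp [hi0, hi1])]
  rw [Finset.sum_range_succ']
  simp only [Nat.cast_zero, zero_mul, add_zero]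
  have key : ∀ i ∈ Finset.range l,
      ((i+1 : ℕ):ℝ) * (if (i+1 : ℕ) = 0 then ((R:ℝ)-l)/R
        else if (i+1:ℕ) ≤ l then ((R:ℝ)-l)/(((R:ℝ)-((i+1:ℕ):ℝ)+1)*((R:ℝ)-((i+1:ℕ):ℝ))) else 0)
      = ((((R:ℝ)-l)*((i+1:ℕ):ℝ)/((R:ℝ)-((i+1:ℕ):ℝ))) - (((R:ℝ)-l)*(i:ℝ)/((R:ℝ)-(i:ℝ))))
        - ((R:ℝ)-l)/((R:ℝ)-(i:ℝ)) := by
    intro i hi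
    simp only [Finset.mem_range] at hi
    rw [if_neg (by omega), if_pos (by omega)]
    have c1 : ((R:ℝ) - ((i+1:ℕ):ℝ)) ≠ 0 := by
      have : ((i:ℝ)+1) ≤ (l:ℝ) := by exact_mod_cast hi
      have : (l:ℝ) < R := by exact_mod_cast h2
      push_cast; linarith
    have c2 : ((R:ℝ) - (i:ℝ)) ≠ 0 := by
      have : (i:ℝ) < (l:ℝ) := by exact_mod_cast hi
      have : (l:ℝ) < R := by exact_mod_cast h2
      linarith
    push_cast at c1 c2 ⊢
    exact aux_term c2 c1
  rw [Finset.sum_congr rfl key, Finset.sum_sub_distrib,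
    Finset.sum_range_sub (fun i => ((R:ℝ)-l)*(i:ℝ)/((R:ℝ)-(i:ℝ)))]
  simp only [Nat.cast_zero, mul_zero, zero_div, sub_zero]
  have hRl : ((R:ℝ) - l) ≠ 0 := by
    have : (l:ℝ) < R := by exact_mod_cast h2
    linarith
  have hsum : ∑ x ∈ Finset.range l, ((R:ℝ)-l)/((R:ℝ)-x)
      = ((R:ℝ)-l) * ∑ x ∈ Finset.range l, 1/((R:ℝ)-x) := by
    rw [Finset.mul_sum]; exact Finset.sum_congr rfl fun i _ => by ring
  rw [hsum]
  field_simp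

/-- Expected equilibrium conflict investments, as shares of the endowment, converge to
`1 - 2/e` for Attacker and `1/e` for Defender. -/
theorem expected_investment_shares_tendsto (L : ℕ → ℕ)
    (hL : ∀ R, 2 ≤ R → IsUpperBound R (L R)) :
    Filter.Tendsto (fun R : ℕ => Einv R (astar R (L R)) / R) Filter.atTop
      (nhds (1 - 2 / Real.exp 1)) ∧
    Filter.Tendsto (fun R : ℕ => Einv R (dstar R (L R)) / R) Filter.atTop
      (nhds (1 / Real.exp 1)) := by
  classical
  set m : ℕ → ℕ := fun R => R - L R with hmdef
  set g : ℕ → ℝ := fun R => H R - H (m R) with hgdef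
  set f : ℕ → ℝ := fun R => (m R : ℝ) / R with hfdef
  -- basic facts
  have hbasic : ∀ R, 2 ≤ R →
      1 ≤ L R ∧ L R ≤ R - 1 ∧ 1 ≤ m R ∧ m R ≤ R - 1 ∧ g R < 1 ∧ 1 - 1/(m R : ℝ) < g R := by
    intro R hR
    obtain ⟨h1, h2, h3, h4⟩ := hL R hR
    have hm1 : 1 ≤ m R := by simp only [hmdef]; omega
    have hm2 : m R ≤ R - 1 := by simp only [hmdef]; omega
    refine ⟨h1, h2, hm1, hm2, h3, ?_⟩
    have hc : ((m R - 1 : ℕ):ℝ) = (m R : ℝ) - 1 := by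
      rw [Nat.cast_sub hm1, Nat.cast_one]
    have hH : H (m R) = H (m R - 1) + 1/(m R : ℝ) := by
      conv_lhs => rw [show m R = (m R - 1) + 1 by omega]
      rw [H_succ, hc]
      ring_nf
    have h4' : 1 < H R - H (m R - 1) := by
      have : R - L R - 1 = m R - 1 := by simp only [hmdef]
      rw [this] at h4
      exact h4
    simp only [hgdef]
    linarith
  -- lower bound on m
  have hElb : ∀ R : ℕ, 2 ≤ R → ((R:ℝ)+1)/Real.exp 1 - 1 ≤ (m R : ℝ) := by
    intro R hR
    obtain ⟨_, _, hm1, hm2, h3, _⟩ := hbasic R hR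
    have hmR : m R ≤ R := by omega
    have hlog : Real.log ((R:ℝ)+1) - Real.log ((m R:ℝ)+1) < 1 :=
      lt_of_le_of_lt (log_le_harmonic hm1 hmR) h3
    have hp1 : (0:ℝ) < (R:ℝ)+1 := by positivity
    have hp2 : (0:ℝ) < (m R:ℝ)+1 := by positivity
    have h5 : Real.log ((R:ℝ)+1) < 1 + Real.log ((m R:ℝ)+1) := by linarith
    have h6 : ((R:ℝ)+1) < Real.exp 1 * ((m R:ℝ)+1) := by
      calc (R:ℝ)+1 = Real.exp (Real.log ((R:ℝ)+1)) := (Real.exp_log hp1).symm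
        _ < Real.exp (1 + Real.log ((m R:ℝ)+1)) := Real.exp_lt_exp.mpr h5
        _ = Real.exp 1 * ((m R:ℝ)+1) := by rw [Real.exp_add, Real.exp_log hp2]
    have he : (0:ℝ) < Real.exp 1 := Real.exp_pos 1
    rw [div_sub' (ne_of_gt he), div_le_iff₀ he]
    nlinarith
  -- m tends to infinity
  have hm_top : Filter.Tendsto (fun R : ℕ => ((m R : ℕ):ℝ)) Filter.atTop Filter.atTop := by
    apply Filter.tendsto_atTop_mono' Filter.atTop
      (Filter.eventually_atTop.2 ⟨2, fun R hR => hElb R hR⟩)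
    apply Filter.tendsto_atTop_add_const_right
    apply Filter.Tendsto.atTop_div_const (Real.exp_pos 1)
    apply Filter.tendsto_atTop_add_const_right
    exact tendsto_natCast_atTop_atTop
  have hinv0 : Filter.Tendsto (fun R : ℕ => 1/((m R:ℕ):ℝ)) Filter.atTop (nhds 0) := by
    simpa [one_div, Function.comp_def] using tendsto_inv_atTop_zero.comp hm_top
  -- g tends to 1
  have hg1 : Filter.Tendsto g Filter.atTop (nhds 1) := by
    apply tendsto_of_tendsto_of_tendsto_of_le_of_le'
      (g := fun R : ℕ => 1 - 1/((m R:ℕ):ℝ)) (h := fun _ : ℕ => (1:ℝ))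
    · simpa using tendsto_const_nhds.sub hinv0
    · exact tendsto_const_nhds
    · filter_upwards [Filter.eventually_ge_atTop 2] with R hR
      exact le_of_lt (hbasic R hR).2.2.2.2.2
    · filter_upwards [Filter.eventually_ge_atTop 2] with R hR
      exact le_of_lt (hbasic R hR).2.2.2.2.1
  -- f tends to 1/e
  have hf : Filter.Tendsto f Filter.atTop (nhds (1/Real.exp 1)) := by
    apply tendsto_of_tendsto_of_tendsto_of_le_of_le'
      (g := fun R : ℕ => (((R:ℝ)+1)/Real.exp 1 - 1)/(R:ℝ))
      (h := fun R : ℕ => Real.exp (1/((m R:ℕ):ℝ) - 1))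
    · -- lower sequence tends to 1/e
      have hcongr : ∀ᶠ R : ℕ in Filter.atTop,
          (1/Real.exp 1) * (1 + 1/(R:ℝ)) - 1/(R:ℝ) = (((R:ℝ)+1)/Real.exp 1 - 1)/(R:ℝ) := by
        filter_upwards [Filter.eventually_ge_atTop 1] with R hR
        have hR0 : ((R:ℝ)) ≠ 0 := by positivity
        have he : Real.exp 1 ≠ 0 := ne_of_gt (Real.exp_pos 1)
        field_simp
      apply Filter.Tendsto.congr' hcongr
      have h1 : Filter.Tendsto (fun R : ℕ => (1/Real.exp 1) * (1 + 1/(R:ℝ)) - 1/(R:ℝ))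
          Filter.atTop (nhds ((1/Real.exp 1) * (1 + 0) - 0)) :=
        (tendsto_const_nhds.mul (tendsto_const_nhds.add tendsto_one_div_atTop_nhds_zero_nat)).sub
          tendsto_one_div_atTop_nhds_zero_nat
      simpa using h1
    · -- upper sequence tends to 1/e
      have h1 : Filter.Tendsto (fun R : ℕ => Real.exp (1/((m R:ℕ):ℝ) - 1))
          Filter.atTop (nhds (Real.exp (0 - 1))) :=
        (Real.continuous_exp.tendsto _).comp (hinv0.sub tendsto_const_nhds)
      simpa [Real.exp_neg, one_div] using h1
    · -- lower bound
      filter_upwards [Filter.eventually_ge_atTop 2] with R hR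
      have hR0 : (0:ℝ) ≤ (R:ℝ) := by positivity
      exact div_le_div_of_nonneg_right (hElb R hR) hR0
    · -- upper bound
      filter_upwards [Filter.eventually_ge_atTop 2] with R hR
      obtain ⟨_, _, hm1, hm2, _, h6⟩ := hbasic R hR
      have hmR : m R ≤ R := by omega
      have hR0 : (0:ℝ) < (R:ℝ) := by positivity
      have hm0 : (0:ℝ) < ((m R:ℕ):ℝ) := by exact_mod_cast hm1
      have hlog : 1 - 1/((m R:ℕ):ℝ) < Real.log (R:ℝ) - Real.log ((m R:ℕ):ℝ) :=
        lt_of_lt_of_le h6 (harmonic_le_log hm1 hmR)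
      have h7 : Real.exp (1 - 1/((m R:ℕ):ℝ)) * ((m R:ℕ):ℝ) < (R:ℝ) := by
        calc Real.exp (1 - 1/((m R:ℕ):ℝ)) * ((m R:ℕ):ℝ)
            = Real.exp (1 - 1/((m R:ℕ):ℝ) + Real.log ((m R:ℕ):ℝ)) := by
              rw [Real.exp_add, Real.exp_log hm0]
          _ < Real.exp (Real.log (R:ℝ)) := Real.exp_lt_exp.mpr (by linarith)
          _ = (R:ℝ) := Real.exp_log hR0
      have hkey : Real.exp (1/((m R:ℕ):ℝ) - 1) * Real.exp (1 - 1/((m R:ℕ):ℝ)) = 1 := by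
        rw [← Real.exp_add, show (1/((m R:ℕ):ℝ) - 1) + (1 - 1/((m R:ℕ):ℝ)) = 0 by ring,
          Real.exp_zero]
      have hep : (0:ℝ) < Real.exp (1/((m R:ℕ):ℝ) - 1) := Real.exp_pos _
      rw [hfdef]
      simp only
      rw [div_le_iff₀ hR0]
      nlinarith
  have hfg : Filter.Tendsto (fun R : ℕ => f R * g R) Filter.atTop (nhds (1/Real.exp 1)) := by
    simpa using hf.mul hg1
  constructor
  · -- Attacker
    have heq : ∀ᶠ R : ℕ in Filter.atTop,
        1 - f R - f R * g R = Einv R (astar R (L R)) / R := by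
      filter_upwards [Filter.eventually_ge_atTop 2] with R hR
      obtain ⟨h1, h2, hm1, hm2, _, _⟩ := hbasic R hR
      have hlR : L R < R := by omega
      have hR0 : ((R:ℝ)) ≠ 0 := by positivity
      rw [Einv_astar hlR, S_eq_H (le_of_lt hlR)]
      have hcast : ((m R:ℕ):ℝ) = (R:ℝ) - (L R:ℝ) := by
        simp only [hmdef]
        rw [Nat.cast_sub (le_of_lt hlR)]
      have hgr : H R - H (R - L R) = g R := by rw [hgdef]
      rw [hgr]
      rw [hfdef]
      simp only
      rw [hcast]
      field_simp
      ring
    have h1 : Filter.Tendsto (fun R : ℕ => 1 - f R - f R * g R) Filter.atTop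
        (nhds (1 - 2/Real.exp 1)) := by
      have h2 : Filter.Tendsto (fun R : ℕ => 1 - f R - f R * g R) Filter.atTop
          (nhds (1 - 1/Real.exp 1 - 1/Real.exp 1)) :=
        ((tendsto_const_nhds (x := (1:ℝ))).sub hf).sub hfg
      have hval : (1:ℝ) - 1/Real.exp 1 - 1/Real.exp 1 = 1 - 2/Real.exp 1 := by ring
      rw [hval] at h2
      exact h2
    exact h1.congr' heq
  · -- Defender
    have heq : ∀ᶠ R : ℕ in Filter.atTop,
        f R * g R = Einv R (dstar R (L R)) / R := by
      filter_upwards [Filter.eventually_ge_atTop 2] with R hR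
      obtain ⟨h1, h2, hm1, hm2, _, _⟩ := hbasic R hR
      have hlR : L R < R := by omega
      have hR0 : ((R:ℝ)) ≠ 0 := by positivity
      rw [Einv_dstar hlR, S_eq_H (le_of_lt hlR)]
      have hcast : ((m R:ℕ):ℝ) = (R:ℝ) - (L R:ℝ) := by
        simp only [hmdef]
        rw [Nat.cast_sub (le_of_lt hlR)]
      have hgr : H R - H (R - L R) = g R := by rw [hgdef]
      rw [hgr, hfdef]
      simp only
      rw [hcast]
      ring
    exact hfg.congr' heq
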